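/- Let U ∈ ℝ^{w×r} have orthonormal columns u₁, …, u_r, let σ₁, …, σ_r > 0, let E ∈ ℝ^{w×r} have columns e₁, …, e_r with ‖e_i‖₂ < σ_i for every i, and let Δ ∈ ℝ^{p×r} be any matrix. Define σ̂_i = ‖σ_i·u_i + e_i‖₂ > 0 and let Û ∈ ℝ^{w×r} be the matrix whose i-th column is (σ_i·u_i + e_i)/σ̂_i. Then ‖Û − U‖_F + ‖Δ‖_F + ‖Û − U‖_F·‖Δ‖_F ≤ 2‖E‖_F·(1 + ‖Δ‖_F)/min_{1≤i≤r}(σ_i − ‖e_i‖₂) + ‖Δ‖_F. -/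

import Mathlib

open Matrix

/-- Euclidean norm of a vector in ℝ^n. -/
noncomputable def vnorm {n : ℕ} (v : Fin n → ℝ) : ℝ :=
  Real.sqrt (∑ i, (v i) ^ 2)

/-- Frobenius norm of a real matrix. -/
noncomputable def frob {m n : ℕ} (M : Matrix (Fin m) (Fin n) ℝ) : ℝ :=
  Real.sqrt (∑ i, ∑ j, (M i j) ^ 2)

lemma vnorm_eq {n : ℕ} (v : Fin n → ℝ) :
    vnorm v = ‖(WithLp.equiv 2 (Fin n → ℝ)).symm v‖ := by
  rw [EuclideanSpace.norm_eq]
  simp [vnorm, Real.norm_eq_abs, sq_abs]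

lemma vnorm_nonneg {n : ℕ} (v : Fin n → ℝ) : 0 ≤ vnorm v :=
  Real.sqrt_nonneg _

lemma vnorm_add_le {n : ℕ} (u v : Fin n → ℝ) :
    vnorm (u + v) ≤ vnorm u + vnorm v := by
  rw [vnorm_eq, vnorm_eq, vnorm_eq]
  exact norm_add_le ((WithLp.equiv 2 (Fin n → ℝ)).symm u) ((WithLp.equiv 2 (Fin n → ℝ)).symm v)

lemma vnorm_smul {n : ℕ} (c : ℝ) (v : Fin n → ℝ) :
    vnorm (c • v) = |c| * vnorm v := by
  rw [vnorm_eq, vnorm_eq]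
  have : (WithLp.equiv 2 (Fin n → ℝ)).symm (c • v) = c • (WithLp.equiv 2 (Fin n → ℝ)).symm v := rfl
  rw [this, norm_smul, Real.norm_eq_abs]

lemma col_bound {n : ℕ} (u e : Fin n → ℝ) (σ m : ℝ) (hσ : 0 < σ)
    (hu : vnorm u = 1) (hm : 0 < m) (hm' : m ≤ σ - vnorm e) :
    vnorm (fun k => (σ * u k + e k) / vnorm (fun j => σ * u j + e j) - u k)
      ≤ 2 * vnorm e / m := by
  have he0 : 0 ≤ vnorm e := vnorm_nonneg e
  have hfun : (fun j => σ * u j + e j) = σ • u + e := by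
    funext j; simp [smul_eq_mul]
  set s := vnorm (fun j => σ * u j + e j) with hs
  have hsu : vnorm (σ • u) = σ := by
    rw [vnorm_smul, hu, abs_of_pos hσ, mul_one]
  have h1 : σ ≤ s + vnorm e := by
    calc σ = vnorm (σ • u) := hsu.symm
      _ = vnorm ((σ • u + e) + (-1 : ℝ) • e) := by congr 1; funext k; simp
      _ ≤ vnorm (σ • u + e) + vnorm ((-1 : ℝ) • e) := vnorm_add_le _ _
      _ = s + vnorm e := by rw [vnorm_smul, hs, hfun]; simp
  have h2 : s ≤ σ + vnorm e := by
    calc s = vnorm (σ • u + e) := by rw [hs, hfun]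
      _ ≤ vnorm (σ • u) + vnorm e := vnorm_add_le _ _
      _ = σ + vnorm e := by rw [hsu]
  have hms : m ≤ s := by linarith
  have hs_pos : 0 < s := lt_of_lt_of_le hm hms
  have hdiff : |σ - s| ≤ vnorm e := abs_sub_le_iff.mpr ⟨by linarith, by linarith⟩
  have hfun2 : (fun k => (σ * u k + e k) / s - u k) = ((σ - s)/s) • u + s⁻¹ • e := by
    funext k; simp [smul_eq_mul]; field_simp; ring
  rw [hfun2]
  have c1 : vnorm (((σ - s)/s) • u + s⁻¹ • e) ≤ |σ - s|/s + vnorm e / s := by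
    calc vnorm (((σ - s)/s) • u + s⁻¹ • e)
        ≤ vnorm (((σ - s)/s) • u) + vnorm (s⁻¹ • e) := vnorm_add_le _ _
      _ = |σ - s|/s + vnorm e / s := by
          rw [vnorm_smul, vnorm_smul, hu, mul_one, abs_div, abs_of_pos hs_pos,
            abs_inv, abs_of_pos hs_pos, inv_mul_eq_div]
  have c2 : |σ - s|/s ≤ vnorm e / m := div_le_div₀ he0 hdiff hm hms
  have c3 : vnorm e / s ≤ vnorm e / m := div_le_div_of_nonneg_left he0 hm hms
  have : vnorm e / m + vnorm e / m = 2 * vnorm e / m := by ring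
  linarith

/-- Bound on the first component of `η_{C,xy}` in the proof of Theorem 2 of the
SWICCA paper: with `Û` the matrix of normalized perturbed columns,
`‖Û − U‖_F + ‖Δ‖_F + ‖Û − U‖_F·‖Δ‖_F ≤
  2‖E‖_F(1 + ‖Δ‖_F)/min_i(σ_i − ‖e_i‖₂) + ‖Δ‖_F`. -/
theorem swicca_eta_component_bound {w r p : ℕ} (hr : 0 < r)
    (U E : Matrix (Fin w) (Fin r) ℝ) (hU : Uᵀ * U = 1)
    (σ : Fin r → ℝ) (hσ : ∀ i, 0 < σ i)
    (hE : ∀ i, vnorm (fun k => E k i) < σ i)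
    (Δ : Matrix (Fin p) (Fin r) ℝ) :
    frob ((Matrix.of fun k i =>
        (σ i * U k i + E k i) / vnorm (fun j => σ i * U j i + E j i)) - U)
      + frob Δ
      + frob ((Matrix.of fun k i =>
          (σ i * U k i + E k i) / vnorm (fun j => σ i * U j i + E j i)) - U)
        * frob Δ ≤
      2 * frob E * (1 + frob Δ) / (⨅ i, (σ i - vnorm (fun k => E k i)))
        + frob Δ := by
  haveI : Nonempty (Fin r) := ⟨⟨0, hr⟩⟩
  set m := ⨅ i, (σ i - vnorm (fun k => E k i)) with hmdef
  set M := (Matrix.of fun k i =>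
      (σ i * U k i + E k i) / vnorm (fun j => σ i * U j i + E j i)) - U with hMdef
  have hbdd : BddBelow (Set.range fun i => σ i - vnorm (fun k => E k i)) :=
    (Set.finite_range _).bddBelow
  have hm_le : ∀ i, m ≤ σ i - vnorm (fun k => E k i) := fun i => ciInf_le hbdd i
  have hm_pos : 0 < m := by
    obtain ⟨i0, hi0⟩ := Finite.exists_min (fun i => σ i - vnorm (fun k => E k i))
    have h0 : (0 : ℝ) < σ i0 - vnorm (fun k => E k i0) := by
      have := hE i0; linarith
    exact lt_of_lt_of_le h0 (le_ciInf hi0)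
  have hsq : ∀ {q : ℕ} (v : Fin q → ℝ), (vnorm v) ^ 2 = ∑ k, v k ^ 2 := by
    intro q v
    exact Real.sq_sqrt (Finset.sum_nonneg fun _ _ => sq_nonneg _)
  have hu_i : ∀ i, vnorm (fun k => U k i) = 1 := by
    intro i
    have h := congrFun (congrFun hU i) i
    rw [Matrix.mul_apply] at h
    have h1 : ∑ k, U k i ^ 2 = 1 := by
      simpa [Matrix.transpose_apply, Matrix.one_apply, sq] using h
    rw [vnorm, h1, Real.sqrt_one]
  have hcol : ∀ i, vnorm (fun k => M k i) ≤ 2 * vnorm (fun k => E k i) / m := by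
    intro i
    have h := col_bound (fun k => U k i) (fun k => E k i) (σ i) m (hσ i)
      (hu_i i) hm_pos (hm_le i)
    have heq : (fun k => M k i)
        = fun k => (σ i * U k i + E k i) / vnorm (fun j => σ i * U j i + E j i) - U k i := by
      funext k; simp [hMdef, Matrix.sub_apply]
    rw [heq]
    exact h
  have hfM : frob M = Real.sqrt (∑ i, (vnorm (fun k => M k i)) ^ 2) := by
    rw [frob, Finset.sum_comm]
    congr 1
    exact Finset.sum_congr rfl fun i _ => (hsq _).symm
  have hfE : frob E = Real.sqrt (∑ i, (vnorm (fun k => E k i)) ^ 2) := by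
    rw [frob, Finset.sum_comm]
    congr 1
    exact Finset.sum_congr rfl fun i _ => (hsq _).symm
  have hsumE : 0 ≤ ∑ i, (vnorm (fun k => E k i)) ^ 2 :=
    Finset.sum_nonneg fun _ _ => sq_nonneg _
  have hA : frob M ≤ 2 * frob E / m := by
    rw [hfM]
    have hstep : ∑ i, (vnorm (fun k => M k i)) ^ 2
        ≤ ∑ i, (2 / m * vnorm (fun k => E k i)) ^ 2 := by
      apply Finset.sum_le_sum
      intro i _
      have h1 : 2 / m * vnorm (fun k => E k i) = 2 * vnorm (fun k => E k i) / m := by ring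
      exact pow_le_pow_left₀ (vnorm_nonneg _) (h1 ▸ hcol i) 2
    calc Real.sqrt (∑ i, (vnorm (fun k => M k i)) ^ 2)
        ≤ Real.sqrt (∑ i, (2 / m * vnorm (fun k => E k i)) ^ 2) := Real.sqrt_le_sqrt hstep
      _ = Real.sqrt ((2 / m) ^ 2 * ∑ i, (vnorm (fun k => E k i)) ^ 2) := by
          rw [Finset.mul_sum]; congr 1; exact Finset.sum_congr rfl fun i _ => by ring
      _ = (2 / m) * Real.sqrt (∑ i, (vnorm (fun k => E k i)) ^ 2) := by
          rw [Real.sqrt_mul (sq_nonneg _), Real.sqrt_sq (by positivity)]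
      _ = 2 * frob E / m := by rw [hfE]; ring
  have hM0 : 0 ≤ frob M := Real.sqrt_nonneg _
  have hD0 : 0 ≤ frob Δ := Real.sqrt_nonneg _
  have hE0 : 0 ≤ frob E := Real.sqrt_nonneg _
  have hrw : 2 * frob E * (1 + frob Δ) / m = 2 * frob E / m + (2 * frob E / m) * frob Δ := by
    field_simp
  rw [hrw]
  nlinarith [mul_le_mul_of_nonneg_right hA hD0]
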